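/- For N > 3, the family { A_S^N : S ∈ S_N } is a clique cover of the Johnson graph J(N,3), where S_N is the set of 2-element subsets {i,j} of [N] that are contained either in {1,...,⌊N/2⌋} or in {⌊N/2⌋+1,...,N}. In particular θ(J(N,3)) ≤ ⌊(N−1)²/4⌋. -/

import Mathlib

/-- The Johnson graph `J(N, k)`. -/
def johnson (N k : ℕ) : SimpleGraph {S : Finset (Fin N) // S.card = k} where
  Adj S T := S ≠ T ∧ (S.1 ∩ T.1).card = k - 1
  symm := by
    constructor
    intro S T h
    exact ⟨h.1.symm, by rw [Finset.inter_comm]; exact h.2⟩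
  loopless := by
    constructor
    intro S h
    exact h.1 rfl

/-- The (vertex) clique covering number of a graph. -/
noncomputable def theta {V : Type*} (G : SimpleGraph V) : ℕ :=
  sInf {n | ∃ 𝒞 : Finset (Set V), 𝒞.card = n ∧ (∀ C ∈ 𝒞, G.IsClique C) ∧
    ∀ v, ∃ C ∈ 𝒞, v ∈ C}

/-- The family `{A_P : P ∈ S_N}` where `S_N` consists of the 2-element subsets
of `[N]` contained in the lower half `{1, …, ⌊N/2⌋}` or in the upper half
`{⌊N/2⌋+1, …, N}`; the clique `A_P` consists of the 3-sets containing `P`. -/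
def coverC (N : ℕ) : Set (Set {T : Finset (Fin N) // T.card = 3}) :=
  {C | ∃ P : Finset (Fin N), P.card = 2 ∧
        ((∀ x ∈ P, (x : ℕ) < N / 2) ∨ (∀ x ∈ P, N / 2 ≤ (x : ℕ))) ∧
        C = {T | P ⊆ T.1}}

lemma aux_clique (N : ℕ) : ∀ C ∈ coverC N, (johnson N 3).IsClique C := by
  rintro C ⟨P, hP2, -, rfl⟩ S hS T hT hST
  refine ⟨hST, ?_⟩
  have hsub : P ⊆ S.1 ∩ T.1 := Finset.subset_inter hS hT
  have h2 : 2 ≤ (S.1 ∩ T.1).card := by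
    rw [← hP2]; exact Finset.card_le_card hsub
  have h3 : (S.1 ∩ T.1).card ≤ 3 :=
    le_of_le_of_eq (Finset.card_le_card Finset.inter_subset_left) S.2
  have hne : (S.1 ∩ T.1).card ≠ 3 := by
    intro h
    apply hST
    have e1 : S.1 ∩ T.1 = S.1 :=
      Finset.eq_of_subset_of_card_le Finset.inter_subset_left (by omega)
    have e2 : S.1 ∩ T.1 = T.1 :=
      Finset.eq_of_subset_of_card_le Finset.inter_subset_right (by rw [T.2, h])
    exact Subtype.ext (e1.symm.trans e2)
  omega

lemma aux_cover (N : ℕ) : ∀ v : {T : Finset (Fin N) // T.card = 3},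
    ∃ C ∈ coverC N, v ∈ C := by
  intro v
  set L := Finset.filter (fun x : Fin N => (x : ℕ) < N / 2) v.1 with hL
  set U := Finset.filter (fun x : Fin N => ¬ (x : ℕ) < N / 2) v.1 with hU
  have hcards : L.card + U.card = 3 := by
    rw [hL, hU, Finset.card_filter_add_card_filter_not, v.2]
  rcases le_or_gt 2 L.card with h | h
  · obtain ⟨P, hPL, hP2⟩ := Finset.exists_subset_card_eq h
    refine ⟨{T | P ⊆ T.1}, ⟨P, hP2, Or.inl fun x hx => ?_, rfl⟩,
      hPL.trans (Finset.filter_subset _ _)⟩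
    exact (Finset.mem_filter.mp (hPL hx)).2
  · have h2 : 2 ≤ U.card := by omega
    obtain ⟨P, hPU, hP2⟩ := Finset.exists_subset_card_eq h2
    refine ⟨{T | P ⊆ T.1}, ⟨P, hP2, Or.inr fun x hx => ?_, rfl⟩,
      hPU.trans (Finset.filter_subset _ _)⟩
    exact le_of_not_gt (Finset.mem_filter.mp (hPU hx)).2

lemma even_mul_pred (n : ℕ) : Even (n * (n - 1)) := by
  rcases n with _ | m
  · simp
  · simpa [Nat.mul_comm] using Nat.even_mul_succ_self m

lemma arith_bound (N : ℕ) (hN : 3 < N) :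
    (N / 2).choose 2 + (N - N / 2).choose 2 ≤ (N - 1) ^ 2 / 4 := by
  rw [Nat.le_div_iff_mul_le (by norm_num : 0 < 4), Nat.choose_two_right, Nat.choose_two_right]
  obtain ⟨c1, hc1⟩ := even_mul_pred (N / 2)
  obtain ⟨c2, hc2⟩ := even_mul_pred (N - N / 2)
  rw [hc1, hc2]
  have e1 : (c1 + c1) / 2 = c1 := by omega
  have e2 : (c2 + c2) / 2 = c2 := by omega
  rw [e1, e2]
  obtain ⟨a, ha⟩ : ∃ a, N / 2 = a + 2 := ⟨N / 2 - 2, by omega⟩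
  rw [ha] at hc1
  have hs1 : a + 2 - 1 = a + 1 := by omega
  have hs2 : a + 3 - 1 = a + 2 := by omega
  rw [hs1] at hc1
  rcases (show N - N / 2 = a + 2 ∨ N - N / 2 = a + 3 by omega) with hb | hb
  · rw [hb, hs1] at hc2
    have hn : N - 1 = 2 * a + 3 := by omega
    rw [hn]
    nlinarith [hc1, hc2]
  · rw [hb, hs2] at hc2
    have hn : N - 1 = 2 * a + 4 := by omega
    rw [hn]
    nlinarith [hc1, hc2]

theorem coverC_is_cover (N : ℕ) (hN : 3 < N) :
    (∀ C ∈ coverC N, (johnson N 3).IsClique C) ∧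
    (∀ v, ∃ C ∈ coverC N, v ∈ C) ∧
    theta (johnson N 3) ≤ (N - 1) ^ 2 / 4 := by
  refine ⟨aux_clique N, aux_cover N, ?_⟩
  classical
  set Lf : Finset (Fin N) := Finset.univ.filter (fun x => (x : ℕ) < N / 2) with hLf
  set Uf : Finset (Fin N) := Finset.univ.filter (fun x => ¬ (x : ℕ) < N / 2) with hUf
  set pairs : Finset (Finset (Fin N)) := Lf.powersetCard 2 ∪ Uf.powersetCard 2 with hpairs
  set 𝒞 : Finset (Set {T : Finset (Fin N) // T.card = 3}) :=
    pairs.image (fun P => {T | P ⊆ T.1}) with h𝒞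
  have hmem : ∀ C ∈ 𝒞, C ∈ coverC N := by
    intro C hC
    rw [h𝒞] at hC
    obtain ⟨P, hP, rfl⟩ := Finset.mem_image.mp hC
    rcases Finset.mem_union.mp hP with h | h
    · obtain ⟨hsub, hcard⟩ := Finset.mem_powersetCard.mp h
      exact ⟨P, hcard, Or.inl fun x hx => (Finset.mem_filter.mp (hsub hx)).2, rfl⟩
    · obtain ⟨hsub, hcard⟩ := Finset.mem_powersetCard.mp h
      exact ⟨P, hcard, Or.inr fun x hx =>
        le_of_not_gt (Finset.mem_filter.mp (hsub hx)).2, rfl⟩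
  have hcover : ∀ v : {T : Finset (Fin N) // T.card = 3}, ∃ C ∈ 𝒞, v ∈ C := by
    intro v
    obtain ⟨C, ⟨P, hP2, hhalf, rfl⟩, hv⟩ := aux_cover N v
    refine ⟨_, ?_, hv⟩
    rw [h𝒞]
    refine Finset.mem_image.mpr ⟨P, ?_, rfl⟩
    rcases hhalf with h | h
    · exact Finset.mem_union_left _ (Finset.mem_powersetCard.mpr
        ⟨fun x hx => Finset.mem_filter.mpr ⟨Finset.mem_univ x, h x hx⟩, hP2⟩)
    · exact Finset.mem_union_right _ (Finset.mem_powersetCard.mpr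
        ⟨fun x hx => Finset.mem_filter.mpr ⟨Finset.mem_univ x, not_lt_of_ge (h x hx)⟩, hP2⟩)
  have htheta : theta (johnson N 3) ≤ 𝒞.card :=
    Nat.sInf_le ⟨𝒞, rfl, fun C hC => aux_clique N C (hmem C hC), hcover⟩
  have hLcard : Lf.card = N / 2 := by
    have hlt : N / 2 < N := by omega
    have : Lf = Finset.Iio (⟨N / 2, hlt⟩ : Fin N) := by
      ext x
      simp [hLf, Fin.lt_def]
    rw [this, Fin.card_Iio]
  have hUcard : Uf.card = N - N / 2 := by
    have hc : Uf = Lfᶜ := by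
      ext x
      simp [hLf, hUf]
    rw [hc, Finset.card_compl, hLcard, Fintype.card_fin]
  have hpc : pairs.card ≤ (N / 2).choose 2 + (N - N / 2).choose 2 := by
    calc pairs.card ≤ (Lf.powersetCard 2).card + (Uf.powersetCard 2).card :=
          Finset.card_union_le _ _
      _ = (N / 2).choose 2 + (N - N / 2).choose 2 := by
          rw [Finset.card_powersetCard, Finset.card_powersetCard, hLcard, hUcard]
  calc theta (johnson N 3) ≤ 𝒞.card := htheta
    _ ≤ pairs.card := by rw [h𝒞]; exact Finset.card_image_le
    _ ≤ (N / 2).choose 2 + (N - N / 2).choose 2 := hpc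
    _ ≤ (N - 1) ^ 2 / 4 := arith_bound N hN
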